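/- For every ε > 0 there is a constant C(ε) such that for all positive integers n and all A with 1 ≤ A ≤ n, the number of indices j with A < a_j ≤ 2A in the iteration a_{j+1} = n mod a_j (for any starting value a_0 ≤ n) is at most C(ε)·A^{1/2}·n^{ε}. -/

import Mathlib

open Real Finset

lemma divisor_bound {ε : ℝ} (hε : 0 < ε) :
    ∃ C : ℝ, 1 ≤ C ∧ ∀ m : ℕ, 0 < m → ((m.divisors.card : ℝ)) ≤ C * (m : ℝ) ^ ε := by
  set K : ℝ := max 1 (1 / (ε * Real.log 2)) with hKdef
  have hK1 : 1 ≤ K := le_max_left _ _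
  have hlog2 : 0 < Real.log 2 := Real.log_pos (by norm_num)
  have hKε : 1 ≤ K * (ε * Real.log 2) := by
    have h2 : 0 < ε * Real.log 2 := by positivity
    calc (1:ℝ) = (1 / (ε * Real.log 2)) * (ε * Real.log 2) := by field_simp
    _ ≤ K * (ε * Real.log 2) := by
        exact mul_le_mul_of_nonneg_right (le_max_right _ _) h2.le
  set B : ℕ := ⌈(2:ℝ) ^ ((1:ℝ)/ε)⌉₊ with hBdef
  refine ⟨K ^ B, one_le_pow₀ hK1, ?_⟩
  intro m hm
  -- per prime bound
  have key : ∀ p ∈ m.primeFactors, (m.factorization p + 1 : ℝ) ≤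
      (if (p:ℝ) < (2:ℝ) ^ ((1:ℝ)/ε) then K else 1) * ((p:ℝ) ^ (m.factorization p)) ^ ε := by
    intro p hp
    have hpp : p.Prime := Nat.prime_of_mem_primeFactors hp
    have hp2 : (2:ℝ) ≤ (p:ℝ) := by exact_mod_cast hpp.two_le
    set e : ℕ := m.factorization p
    have hppos : (0:ℝ) < (p:ℝ) := by linarith
    have hrw : ((p:ℝ) ^ e) ^ ε = (p:ℝ) ^ ((e:ℝ) * ε) := by
      rw [← Real.rpow_natCast (p:ℝ) e, ← Real.rpow_mul hppos.le]
    split_ifs with hsmall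
    · -- small prime: use K
      have hexp : (p:ℝ) ^ ((e:ℝ) * ε) = Real.exp ((e:ℝ) * ε * Real.log p) := by
        rw [Real.rpow_def_of_pos hppos]; ring_nf
      have h1 : (e:ℝ) * ε * Real.log p + 1 ≤ Real.exp ((e:ℝ) * ε * Real.log p) :=
        Real.add_one_le_exp _
      have hlogp : Real.log 2 ≤ Real.log p := Real.log_le_log (by norm_num) hp2
      have he0 : (0:ℝ) ≤ (e:ℝ) := Nat.cast_nonneg e
      have h3 : (e:ℝ) + 1 ≤ K * ((e:ℝ) * ε * Real.log p + 1) := by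
        have : (e:ℝ) * 1 ≤ (e:ℝ) * (K * (ε * Real.log p)) := by
          apply mul_le_mul_of_nonneg_left _ he0
          calc (1:ℝ) ≤ K * (ε * Real.log 2) := hKε
          _ ≤ K * (ε * Real.log p) := by
              apply mul_le_mul_of_nonneg_left _ (by linarith)
              exact mul_le_mul_of_nonneg_left hlogp hε.le
        nlinarith
      calc (e:ℝ) + 1 ≤ K * ((e:ℝ) * ε * Real.log p + 1) := h3
      _ ≤ K * Real.exp ((e:ℝ) * ε * Real.log p) := by
          apply mul_le_mul_of_nonneg_left h1 (by linarith)
      _ = K * ((p:ℝ) ^ e) ^ ε := by rw [hrw, hexp]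
    · -- big prime: p ^ ε ≥ 2
      push_neg at hsmall
      have h2p : (2:ℝ) ≤ (p:ℝ) ^ ε := by
        calc (2:ℝ) = ((2:ℝ) ^ ((1:ℝ)/ε)) ^ ε := by
              rw [← Real.rpow_mul (by norm_num : (0:ℝ) ≤ 2)]
              rw [one_div_mul_cancel hε.ne', Real.rpow_one]
        _ ≤ (p:ℝ) ^ ε := Real.rpow_le_rpow (by positivity) hsmall hε.le
      have h1 : (e:ℝ) + 1 ≤ (2:ℝ) ^ e := by
        have := Nat.lt_two_pow_self (n := e)
        exact_mod_cast Nat.succ_le_of_lt this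
      calc (e:ℝ) + 1 ≤ (2:ℝ) ^ e := h1
      _ ≤ ((p:ℝ) ^ ε) ^ e := pow_le_pow_left₀ (by norm_num) h2p e
      _ = (p:ℝ) ^ (ε * (e:ℝ)) := by
          rw [← Real.rpow_natCast ((p:ℝ) ^ ε) e, ← Real.rpow_mul hppos.le]
      _ = ((p:ℝ) ^ e) ^ ε := by rw [hrw, mul_comm]
      _ = 1 * ((p:ℝ) ^ e) ^ ε := (one_mul _).symm
  -- assemble
  have hcard : ((m.divisors.card : ℝ)) =
      ∏ p ∈ m.primeFactors, ((m.factorization p : ℝ) + 1) := by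
    rw [Nat.card_divisors hm.ne']
    push_cast
    rfl
  have hprod : ((m.divisors.card : ℝ)) ≤
      ∏ p ∈ m.primeFactors, ((if (p:ℝ) < (2:ℝ) ^ ((1:ℝ)/ε) then K else 1) *
        ((p:ℝ) ^ (m.factorization p)) ^ ε) := by
    rw [hcard]
    apply Finset.prod_le_prod
    · intro p _; positivity
    · intro p hp; exact_mod_cast key p hp
  rw [Finset.prod_mul_distrib] at hprod
  have hnat : ∏ p ∈ m.primeFactors, p ^ m.factorization p = m := by
    conv_rhs => rw [← Nat.factorization_prod_pow_eq_self hm.ne']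
    rfl
  have hsplit2 : ∏ p ∈ m.primeFactors, ((p:ℝ) ^ (m.factorization p)) ^ ε = (m:ℝ) ^ ε := by
    rw [Real.finset_prod_rpow _ _ (fun p _ => by positivity) ε]
    congr 1
    exact_mod_cast hnat
  have hsplit1 : ∏ p ∈ m.primeFactors, (if (p:ℝ) < (2:ℝ) ^ ((1:ℝ)/ε) then K else 1) ≤ K ^ B := by
    rw [Finset.prod_ite, Finset.prod_const, Finset.prod_const, one_pow, mul_one]
    apply pow_le_pow_right₀ hK1
    calc (m.primeFactors.filter (fun p : ℕ => (p:ℝ) < (2:ℝ) ^ ((1:ℝ)/ε))).card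
        ≤ (Finset.range B).card := by
          apply Finset.card_le_card
          intro p hp
          simp only [Finset.mem_filter] at hp
          rw [Finset.mem_range]
          have : (p:ℝ) < (B:ℝ) := lt_of_lt_of_le hp.2 (Nat.le_ceil _)
          exact_mod_cast this
    _ = B := Finset.card_range B
  calc ((m.divisors.card : ℝ)) ≤ _ := hprod
  _ ≤ K ^ B * (m:ℝ) ^ ε := by
      rw [hsplit2]
      apply mul_le_mul_of_nonneg_right hsplit1 (by positivity)

/-- The iteration `a_0 = a`, `a_{j+1} = n mod a_j`. -/
def pseq (n a : ℕ) : ℕ → ℕ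
  | 0 => a
  | j + 1 => n % pseq n a j

lemma pseq_succ (n a j : ℕ) : pseq n a (j+1) = n % pseq n a j := rfl

lemma pseq_lt_of_lt (n a : ℕ) : ∀ {j k : ℕ}, j < k → (∀ i, i ≤ k → 0 < pseq n a i) →
    pseq n a k < pseq n a j := by
  intro j k
  induction k with
  | zero => omega
  | succ k ih =>
    intro hjk hpos
    have hk : pseq n a (k+1) < pseq n a k := Nat.mod_lt _ (hpos k (by omega))
    rcases Nat.lt_succ_iff_lt_or_eq.mp hjk with h | h
    · exact hk.trans (ih h (fun i hi => hpos i (by omega)))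
    · subst h; exact hk

set_option maxHeartbeats 1000000 in
open Classical in
theorem stmt_11 : ∀ ε > (0:ℝ), ∃ C > (0:ℝ), ∀ n : ℕ, 0 < n → ∀ A : ℝ, 1 ≤ A → A ≤ n →
    ∀ a : ℕ, 0 < a → a ≤ n →
    (((Finset.range (n + 1)).filter (fun j =>
        (∀ i ≤ j, 0 < pseq n a i) ∧ A < (pseq n a j : ℝ) ∧ (pseq n a j : ℝ) ≤ 2 * A)).card : ℝ)
      ≤ C * A ^ ((1:ℝ)/2) * (n : ℝ) ^ ε := by
  intro ε hε
  obtain ⟨C, hC1, hCdiv⟩ := divisor_bound hε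
  have hC0 : (0:ℝ) < C := by linarith
  set s : ℝ := Real.sqrt (8 * C * (2:ℝ) ^ ε) with hsdef
  have hs0 : 0 < s := Real.sqrt_pos.mpr (by positivity)
  have hs2 : s * s = 8 * C * (2:ℝ) ^ ε := Real.mul_self_sqrt (by positivity)
  refine ⟨s + 1, by positivity, ?_⟩
  intro n hn A hA1 hAn a ha han
  set S := (Finset.range (n + 1)).filter (fun j =>
        (∀ i ≤ j, 0 < pseq n a i) ∧ A < (pseq n a j : ℝ) ∧ (pseq n a j : ℝ) ≤ 2 * A) with hSdef
  have hA0 : (0:ℝ) < A := by linarith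
  have hn1 : (1:ℝ) ≤ (n:ℝ) := by exact_mod_cast hn
  have hX1 : (1:ℝ) ≤ A ^ ((1:ℝ)/2) * (n:ℝ) ^ ε := by
    have h1 : (1:ℝ) ≤ A ^ ((1:ℝ)/2) := Real.one_le_rpow hA1 (by norm_num)
    have h2 : (1:ℝ) ≤ (n:ℝ) ^ ε := Real.one_le_rpow hn1 hε.le
    nlinarith
  have hXsq : A ^ ((1:ℝ)/2) * A ^ ((1:ℝ)/2) = A := by
    rw [← Real.rpow_add hA0]; norm_num
  rw [mul_assoc]
  rcases le_or_gt S.card 1 with hT1 | hT2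
  · calc (S.card : ℝ) ≤ 1 := by exact_mod_cast hT1
    _ ≤ (s + 1) * (A ^ ((1:ℝ)/2) * (n:ℝ) ^ ε) := by nlinarith
  -- main case
  have hne : S.Nonempty := Finset.card_pos.mp (by omega)
  set j0 := S.min' hne with hj0def
  set j1 := S.max' hne with hj1def
  have hj0S : j0 ∈ S := S.min'_mem hne
  have hj1S : j1 ∈ S := S.max'_mem hne
  have hj01 : j0 < j1 := S.min'_lt_max'_of_card (by omega)
  have hmem : ∀ j ∈ S, j ≤ n ∧ (∀ i ≤ j, 0 < pseq n a i) ∧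
      A < (pseq n a j : ℝ) ∧ (pseq n a j : ℝ) ≤ 2 * A := by
    intro j hj
    rw [hSdef, Finset.mem_filter, Finset.mem_range] at hj
    exact ⟨by omega, hj.2⟩
  -- S is an interval
  have hint : ∀ j, j0 ≤ j → j ≤ j1 → j ∈ S := by
    intro j hle hge
    obtain ⟨hn1', hpos1, hA1', h2A1⟩ := hmem j1 hj1S
    obtain ⟨_, _, hA0', h2A0⟩ := hmem j0 hj0S
    have hpos : ∀ i ≤ j, 0 < pseq n a i := fun i hi => hpos1 i (by omega)
    have hub : pseq n a j ≤ pseq n a j0 := by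
      rcases eq_or_lt_of_le hle with h | h
      · rw [h]
      · exact (pseq_lt_of_lt n a h (fun i hi => hpos1 i (by omega))).le
    have hlb : pseq n a j1 ≤ pseq n a j := by
      rcases eq_or_lt_of_le hge with h | h
      · rw [h]
      · exact (pseq_lt_of_lt n a h (fun i hi => hpos1 i (by omega))).le
    rw [hSdef, Finset.mem_filter, Finset.mem_range]
    refine ⟨by omega, hpos, ?_, ?_⟩
    · calc A < (pseq n a j1 : ℝ) := hA1'
      _ ≤ (pseq n a j : ℝ) := by exact_mod_cast hlb
    · calc (pseq n a j : ℝ) ≤ (pseq n a j0 : ℝ) := by exact_mod_cast hub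
      _ ≤ 2 * A := h2A0
  have hSeq : S = Finset.Icc j0 j1 := by
    ext j
    rw [Finset.mem_Icc]
    constructor
    · intro hj; exact ⟨S.min'_le j hj, S.le_max' j hj⟩
    · intro hj; exact hint j hj.1 hj.2
  set t := j1 - j0 with htdef
  have hcardS : S.card = t + 1 := by rw [hSeq, Nat.card_Icc]; omega
  have ht1 : 1 ≤ t := by omega
  -- injectivity of pseq on S
  have hinj : ∀ j ∈ S, ∀ k ∈ S, pseq n a j = pseq n a k → j = k := by
    intro j hj k hk hjk
    by_contra hne'
    rcases Nat.lt_or_ge j k with h | h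
    · have := pseq_lt_of_lt n a h (fun i hi => (hmem k hk).2.1 i hi); omega
    · have hlt : k < j := by omega
      have := pseq_lt_of_lt n a hlt (fun i hi => (hmem j hj).2.1 i hi); omega
  -- the gaps
  set g : ℕ → ℕ := fun j => pseq n a j - pseq n a (j + 1) with hgdef
  have hgap : ∀ j, j0 ≤ j → j < j1 →
      pseq n a (j+1) < pseq n a j ∧ 1 ≤ g j ∧ (g j : ℝ) < A ∧ pseq n a j ∣ (n + g j) ∧
      (g j : ℝ) = (pseq n a j : ℝ) - (pseq n a (j+1) : ℝ) := by
    intro j hle hlt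
    have hjS : j ∈ S := hint j hle (by omega)
    have hj1S' : j + 1 ∈ S := hint (j+1) (by omega) (by omega)
    obtain ⟨_, hpos, hAj, h2Aj⟩ := hmem j hjS
    obtain ⟨_, _, hAj1, h2Aj1⟩ := hmem (j+1) hj1S'
    have hdec : pseq n a (j+1) < pseq n a j := by
      rw [pseq_succ]; exact Nat.mod_lt _ (hpos j le_rfl)
    have hgj : g j = pseq n a j - pseq n a (j + 1) := rfl
    have hg1 : 1 ≤ g j := by omega
    have hgcast : (g j : ℝ) = (pseq n a j : ℝ) - (pseq n a (j+1) : ℝ) := by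
      rw [hgj]; push_cast [Nat.cast_sub hdec.le]; ring
    have hgA : (g j : ℝ) < A := by rw [hgcast]; linarith
    have hdvd : pseq n a j ∣ (n + g j) := by
      have h1 : pseq n a j ∣ n - n % pseq n a j := Nat.dvd_sub_mod n
      have h2 : n % pseq n a j = pseq n a (j+1) := (pseq_succ n a j).symm
      have h3 : pseq n a (j+1) ≤ n := by rw [← h2]; exact Nat.mod_le _ _
      have h4 : n + g j = (n - pseq n a (j+1)) + pseq n a j := by
        omega
      rw [h4, ← h2]
      exact Nat.dvd_add (by rwa [h2]) (dvd_refl _)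
    exact ⟨hdec, hg1, hgA, hdvd, hgcast⟩
  -- telescoping sum
  have hsum : ∑ j ∈ Finset.Ico j0 j1, (g j : ℝ)
      = (pseq n a j0 : ℝ) - (pseq n a j1 : ℝ) := by
    rw [Finset.sum_Ico_eq_sum_range]
    have heq : ∀ i ∈ Finset.range (j1 - j0), (g (j0 + i) : ℝ) =
        ((pseq n a (j0 + i) : ℝ)) - ((pseq n a (j0 + (i+1)) : ℝ)) := by
      intro i hi
      rw [Finset.mem_range] at hi
      have := (hgap (j0 + i) (by omega) (by omega)).2.2.2.2
      rw [this]; ring_nf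
    rw [Finset.sum_congr rfl heq, Finset.sum_range_sub' (fun i => (pseq n a (j0 + i) : ℝ))]
    show (pseq n a (j0 + 0) : ℝ) - (pseq n a (j0 + (j1 - j0)) : ℝ) = _
    have h0 : j0 + 0 = j0 := by omega
    have h1 : j0 + (j1 - j0) = j1 := by omega
    rw [h0, h1]
  have hsumA : ∑ j ∈ Finset.Ico j0 j1, (g j : ℝ) < A := by
    obtain ⟨_, _, hAj1, _⟩ := hmem j1 hj1S
    obtain ⟨_, _, _, h2Aj0⟩ := hmem j0 hj0S
    rw [hsum]; linarith
  have htsum : (t : ℝ) ≤ ∑ j ∈ Finset.Ico j0 j1, (g j : ℝ) := by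
    have : ∀ j ∈ Finset.Ico j0 j1, (1:ℝ) ≤ (g j : ℝ) := by
      intro j hj
      rw [Finset.mem_Ico] at hj
      exact_mod_cast (hgap j hj.1 hj.2).2.1
    have h := Finset.card_nsmul_le_sum (Finset.Ico j0 j1) (fun j => (g j : ℝ)) 1 this
    rw [nsmul_eq_mul, mul_one, Nat.card_Ico] at h
    exact_mod_cast h
  have htA : (t : ℝ) < A := lt_of_le_of_lt htsum hsumA
  -- the threshold
  set H : ℕ := ⌈2 * A / (t:ℝ)⌉₊ with hHdef
  have ht0 : (0:ℝ) < (t:ℝ) := by exact_mod_cast ht1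
  have hHlb : 2 * A / (t:ℝ) ≤ (H:ℝ) := Nat.le_ceil _
  have hHub : (H:ℝ) ≤ 2 * A / (t:ℝ) + 1 := (Nat.ceil_lt_add_one (by positivity)).le
  set Gbig := (Finset.Ico j0 j1).filter (fun j => H < g j) with hGbig
  set Gsm := (Finset.Ico j0 j1).filter (fun j => ¬ H < g j) with hGsm
  have hbigsum : (Gbig.card : ℝ) * ((H:ℝ) + 1) ≤ ∑ j ∈ Finset.Ico j0 j1, (g j : ℝ) := by
    calc (Gbig.card : ℝ) * ((H:ℝ) + 1) = ∑ _j ∈ Gbig, ((H:ℝ) + 1) := by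
          rw [Finset.sum_const, nsmul_eq_mul]
    _ ≤ ∑ j ∈ Gbig, (g j : ℝ) := by
          apply Finset.sum_le_sum
          intro j hj
          rw [hGbig, Finset.mem_filter] at hj
          have := hj.2
          push_cast
          exact_mod_cast Nat.succ_le_of_lt this
    _ ≤ ∑ j ∈ Finset.Ico j0 j1, (g j : ℝ) := by
          apply Finset.sum_le_sum_of_subset_of_nonneg (Finset.filter_subset _ _)
          intro j _ _; positivity
  have hbig_lt : (Gbig.card : ℝ) < (t:ℝ) / 2 := by
    have h1 : (Gbig.card : ℝ) * ((H:ℝ) + 1) < A := lt_of_le_of_lt hbigsum hsumA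
    have h2 : 2 * A / (t:ℝ) < (H:ℝ) + 1 := by linarith
    have h3 : 2 * A < ((H:ℝ) + 1) * (t:ℝ) := by
      rw [div_lt_iff₀ ht0] at h2; linarith
    nlinarith [Nat.cast_nonneg (α := ℝ) Gbig.card]
  have hcards : Gbig.card + Gsm.card = t := by
    rw [hGbig, hGsm, Finset.card_filter_add_card_filter_not, Nat.card_Ico]
  have hsm_gt : (t:ℝ) / 2 < (Gsm.card : ℝ) := by
    have : (Gbig.card : ℝ) + (Gsm.card : ℝ) = (t:ℝ) := by exact_mod_cast hcards
    linarith
  -- upper bound on Gsm via divisor counts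
  have hperd : ∀ d : ℕ, (((Finset.Ico j0 j1).filter (fun j => g j = d)).card : ℝ)
      ≤ C * (2 * (n:ℝ)) ^ ε := by
    intro d
    rcases Finset.eq_empty_or_nonempty ((Finset.Ico j0 j1).filter (fun j => g j = d)) with he | hne'
    · rw [he]; simp; positivity
    · obtain ⟨j', hj'⟩ := hne'
      rw [Finset.mem_filter, Finset.mem_Ico] at hj'
      have hdA : (d:ℝ) < A := by
        rw [← hj'.2]; exact (hgap j' hj'.1.1 hj'.1.2).2.2.1
      have hdn : (0:ℕ) < n + d := by omega
      have hcard_le : ((Finset.Ico j0 j1).filter (fun j => g j = d)).card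
          ≤ (n + d).divisors.card := by
        apply Finset.card_le_card_of_injOn (fun j => pseq n a j)
        · intro j hj
          rw [Finset.mem_coe, Finset.mem_filter, Finset.mem_Ico] at hj
          rw [Finset.mem_coe, Nat.mem_divisors]
          have hd := (hgap j hj.1.1 hj.1.2).2.2.2.1
          rw [hj.2] at hd
          exact ⟨hd, by omega⟩
        · intro j hj k hk hjk
          simp only [Finset.mem_coe, Finset.mem_filter, Finset.mem_Ico] at hj hk
          exact hinj j (hint j hj.1.1 (by omega)) k (hint k hk.1.1 (by omega)) hjk
      calc (((Finset.Ico j0 j1).filter (fun j => g j = d)).card : ℝ)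
          ≤ ((n + d).divisors.card : ℝ) := by exact_mod_cast hcard_le
      _ ≤ C * ((n + d : ℕ) : ℝ) ^ ε := hCdiv _ hdn
      _ ≤ C * (2 * (n:ℝ)) ^ ε := by
          apply mul_le_mul_of_nonneg_left _ hC0.le
          apply Real.rpow_le_rpow (by positivity) _ hε.le
          push_cast
          linarith
  have hsm_le : (Gsm.card : ℝ) ≤ (H:ℝ) * (C * (2 * (n:ℝ)) ^ ε) := by
    have hsub : Gsm ⊆ (Finset.Icc 1 H).biUnion
        (fun d => (Finset.Ico j0 j1).filter (fun j => g j = d)) := by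
      intro j hj
      rw [hGsm, Finset.mem_filter, Finset.mem_Ico] at hj
      rw [Finset.mem_biUnion]
      refine ⟨g j, ?_, ?_⟩
      · rw [Finset.mem_Icc]
        exact ⟨(hgap j hj.1.1 hj.1.2).2.1, by omega⟩
      · rw [Finset.mem_filter, Finset.mem_Ico]
        exact ⟨hj.1, rfl⟩
    calc (Gsm.card : ℝ) ≤ (((Finset.Icc 1 H).biUnion
        (fun d => (Finset.Ico j0 j1).filter (fun j => g j = d))).card : ℝ) := by
          exact_mod_cast Finset.card_le_card hsub
    _ ≤ ((∑ d ∈ Finset.Icc 1 H, ((Finset.Ico j0 j1).filter (fun j => g j = d)).card : ℕ) : ℝ) := by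
          exact_mod_cast Finset.card_biUnion_le
    _ = ∑ d ∈ Finset.Icc 1 H, ((((Finset.Ico j0 j1).filter (fun j => g j = d)).card : ℕ) : ℝ) := by
          push_cast; ring
    _ ≤ ∑ _d ∈ Finset.Icc 1 H, C * (2 * (n:ℝ)) ^ ε := Finset.sum_le_sum (fun d _ => hperd d)
    _ = (H:ℝ) * (C * (2 * (n:ℝ)) ^ ε) := by
          rw [Finset.sum_const, nsmul_eq_mul, Nat.card_Icc]
          norm_num
  -- combine: t^2 < 8 A C (2n)^ε
  have hDpos : (0:ℝ) < C * (2 * (n:ℝ)) ^ ε := by positivity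
  have h2At : (1:ℝ) ≤ 2 * A / (t:ℝ) := by
    rw [le_div_iff₀ ht0]; linarith
  have hH4 : (H:ℝ) ≤ 4 * A / (t:ℝ) := by
    calc (H:ℝ) ≤ 2 * A / (t:ℝ) + 1 := hHub
    _ ≤ 2 * A / (t:ℝ) + 2 * A / (t:ℝ) := by linarith
    _ = 4 * A / (t:ℝ) := by ring
  have htsq : (t:ℝ) * (t:ℝ) < 8 * A * (C * (2 * (n:ℝ)) ^ ε) := by
    have h1 : (t:ℝ) / 2 < (4 * A / (t:ℝ)) * (C * (2 * (n:ℝ)) ^ ε) := by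
      calc (t:ℝ) / 2 < (Gsm.card : ℝ) := hsm_gt
      _ ≤ (H:ℝ) * (C * (2 * (n:ℝ)) ^ ε) := hsm_le
      _ ≤ (4 * A / (t:ℝ)) * (C * (2 * (n:ℝ)) ^ ε) :=
          mul_le_mul_of_nonneg_right hH4 hDpos.le
    have h2 : (t:ℝ) * (t:ℝ) / 2 < 4 * A * (C * (2 * (n:ℝ)) ^ ε) := by
      calc (t:ℝ) * (t:ℝ) / 2 = (t:ℝ) * ((t:ℝ)/2) := by ring
      _ < (t:ℝ) * (4 * A / (t:ℝ) * (C * (2 * (n:ℝ)) ^ ε)) := mul_lt_mul_of_pos_left h1 ht0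
      _ = 4 * A * (C * (2 * (n:ℝ)) ^ ε) := by
          field_simp
    linarith
  -- convert (2n)^ε = 2^ε n^ε and finish
  have h2n : (2 * (n:ℝ)) ^ ε = (2:ℝ) ^ ε * (n:ℝ) ^ ε :=
    Real.mul_rpow (by norm_num) (Nat.cast_nonneg n)
  have hnε1 : (1:ℝ) ≤ (n:ℝ) ^ ε := Real.one_le_rpow hn1 hε.le
  have htsq2 : (t:ℝ) * (t:ℝ) ≤ (s * (A ^ ((1:ℝ)/2) * (n:ℝ) ^ ε)) *
      (s * (A ^ ((1:ℝ)/2) * (n:ℝ) ^ ε)) := by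
    have hgoal : (s * (A ^ ((1:ℝ)/2) * (n:ℝ) ^ ε)) * (s * (A ^ ((1:ℝ)/2) * (n:ℝ) ^ ε))
        = (8 * C * (2:ℝ) ^ ε) * (A * ((n:ℝ) ^ ε * (n:ℝ) ^ ε)) := by
      calc (s * (A ^ ((1:ℝ)/2) * (n:ℝ) ^ ε)) * (s * (A ^ ((1:ℝ)/2) * (n:ℝ) ^ ε))
          = (s * s) * ((A ^ ((1:ℝ)/2) * A ^ ((1:ℝ)/2)) * ((n:ℝ) ^ ε * (n:ℝ) ^ ε)) := by ring
      _ = (8 * C * (2:ℝ) ^ ε) * (A * ((n:ℝ) ^ ε * (n:ℝ) ^ ε)) := by rw [hs2, hXsq]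
    rw [hgoal]
    have h1 : 8 * A * (C * (2 * (n:ℝ)) ^ ε) = (8 * C * (2:ℝ) ^ ε) * (A * (n:ℝ) ^ ε) := by
      rw [h2n]; ring
    have h2 : (8 * C * (2:ℝ) ^ ε) * (A * (n:ℝ) ^ ε)
        ≤ (8 * C * (2:ℝ) ^ ε) * (A * ((n:ℝ) ^ ε * (n:ℝ) ^ ε)) := by
      apply mul_le_mul_of_nonneg_left _ (by positivity)
      nlinarith [Real.rpow_nonneg (Nat.cast_nonneg n : (0:ℝ) ≤ (n:ℝ)) ε]
    linarith [htsq]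
  have hXpos : (0:ℝ) < A ^ ((1:ℝ)/2) * (n:ℝ) ^ ε := by linarith
  have htle : (t:ℝ) ≤ s * (A ^ ((1:ℝ)/2) * (n:ℝ) ^ ε) := by
    nlinarith [mul_pos hs0 hXpos, ht0]
  calc (S.card : ℝ) = (t:ℝ) + 1 := by rw [hcardS]; push_cast; ring
  _ ≤ s * (A ^ ((1:ℝ)/2) * (n:ℝ) ^ ε) + 1 := by linarith
  _ ≤ (s + 1) * (A ^ ((1:ℝ)/2) * (n:ℝ) ^ ε) := by nlinarith
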